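/- Let Ψ_m and Ψ_n be the groupoids of m-element and n-element sets with bijections, each mapped into the groupoid E of finite sets. Their inner product groupoid ⟨Ψ_m, Ψ_n⟩ (the weak pullback over E) has groupoid cardinality 1/n! if m = n, and 0 if m ≠ n. -/

import Mathlib

open CategoryTheory

/-- Groupoid cardinality: the sum over isomorphism classes of the reciprocals of the
orders of the automorphism groups, valued in `[0,∞]`. -/
noncomputable def groupoidCard (C : Type*) [Category C] : ENNReal :=
  ∑' c : Quotient (CategoryTheory.isIsomorphicSetoid C),
    ((Nat.card (Aut (Quotient.out c)) : ENNReal))⁻¹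

/-- The weak pullback of `v : Φ ⥤ X` and `w : Ψ ⥤ X`: objects are triples `(a, b, α)`
with `a ∈ Φ`, `b ∈ Ψ` and `α : v(a) ≅ w(b)`. -/
structure WeakPullback {Φ Ψ X : Type*} [Category Φ] [Category Ψ] [Category X]
    (v : Φ ⥤ X) (w : Ψ ⥤ X) where
  a : Φ
  b : Ψ
  α : v.obj a ≅ w.obj b

/-- Morphisms in the weak pullback are pairs of morphisms making the evident square
commute. -/
instance {Φ Ψ X : Type*} [Category Φ] [Category Ψ] [Category X]
    (v : Φ ⥤ X) (w : Ψ ⥤ X) : Category (WeakPullback v w) where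
  Hom P Q := { fg : (P.a ⟶ Q.a) × (P.b ⟶ Q.b) //
      P.α.hom ≫ w.map fg.2 = v.map fg.1 ≫ Q.α.hom }
  id P := ⟨(𝟙 _, 𝟙 _), by simp⟩
  comp {P Q R} f g := ⟨(f.1.1 ≫ g.1.1, f.1.2 ≫ g.1.2), by
    simp only [Functor.map_comp, Category.assoc]
    rw [reassoc_of% f.2, g.2]⟩
  id_comp f := Subtype.ext (Prod.ext (Category.id_comp _) (Category.id_comp _))
  comp_id f := Subtype.ext (Prod.ext (Category.comp_id _) (Category.comp_id _))
  assoc f g h := Subtype.ext (Prod.ext (Category.assoc _ _ _) (Category.assoc _ _ _))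

/-- The groupoid `E` of finite sets and bijections. -/
def FinSetGrpd := Core FintypeCat

instance : Groupoid FinSetGrpd := inferInstanceAs (Groupoid (Core FintypeCat))

/-- The groupoid `Ψ_n` of `n`-element sets and bijections, a full subcategory of
the groupoid of finite sets. -/
def PsiGrpd (n : ℕ) :=
  ObjectProperty.FullSubcategory (fun S : FinSetGrpd => Nat.card ((Core.inclusion FintypeCat).obj S) = n)

instance (n : ℕ) : Category (PsiGrpd n) :=
  inferInstanceAs (Category (ObjectProperty.FullSubcategory _))

/-- The inclusion `v : Ψ_n → E`. -/
def psiIncl (n : ℕ) : PsiGrpd n ⥤ FinSetGrpd :=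
  ObjectProperty.ι _

/-! ### Auxiliary material -/

/-- `PsiGrpd n` is a groupoid (induced from the groupoid of finite sets). -/
instance (n : ℕ) : Groupoid (PsiGrpd n) :=
  { (inferInstance : Category (PsiGrpd n)) with
    inv := fun f => ObjectProperty.homMk (Groupoid.inv f.hom)
    inv_comp := fun f => ObjectProperty.hom_ext _ (Groupoid.inv_comp f.hom)
    comp_inv := fun f => ObjectProperty.hom_ext _ (Groupoid.comp_inv f.hom) }

noncomputable instance (X : FintypeCat) : Fintype X := FintypeCat.fintype

/-- The weak pullback of two groupoids over a category is a groupoid. -/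
instance weakPullbackGroupoid {Φ Ψ X : Type*} [Groupoid Φ] [Groupoid Ψ] [Category X]
    (v : Φ ⥤ X) (w : Ψ ⥤ X) : Groupoid (WeakPullback v w) where
  inv {P Q} f := ⟨(Groupoid.inv f.1.1, Groupoid.inv f.1.2), by
    rw [Groupoid.inv_eq_inv, Groupoid.inv_eq_inv, Functor.map_inv, Functor.map_inv,
      IsIso.comp_inv_eq, Category.assoc, IsIso.eq_inv_comp]
    exact f.2.symm⟩
  inv_comp f := Subtype.ext (Prod.ext (Groupoid.inv_comp _) (Groupoid.inv_comp _))
  comp_inv f := Subtype.ext (Prod.ext (Groupoid.comp_inv _) (Groupoid.comp_inv _))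

/-- View an object of the groupoid of finite sets as a finite set. -/
def toFin (S : FinSetGrpd) : FintypeCat := S.of

/-- Morphisms in `Ψ_n` are (definitionally) isomorphisms of finite sets. -/
def psiHomEquiv {m n : ℕ} (P : PsiGrpd m) (Q : PsiGrpd n) :
    (P.obj ⟶ Q.obj) ≃ (toFin P.obj ≅ toFin Q.obj) :=
  ⟨fun f => CoreHom.iso f, fun e => CoreHom.mk e, fun _ => rfl, fun _ => rfl⟩

lemma card_toFin {n : ℕ} (P : PsiGrpd n) : Nat.card (toFin P.obj) = n := P.property

variable {m n : ℕ}

lemma eq_of_weakPullback (P : WeakPullback (psiIncl m) (psiIncl n)) : m = n := by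
  have e : toFin P.a.obj ≃ toFin P.b.obj :=
    FintypeCat.equivEquivIso.symm (psiHomEquiv P.a P.b P.α.hom)
  exact (card_toFin P.a).symm.trans ((Nat.card_congr e).trans (card_toFin P.b))

lemma isEmpty_wp (h : m ≠ n) : IsEmpty (WeakPullback (psiIncl m) (psiIncl n)) :=
  ⟨fun P => h (eq_of_weakPullback P)⟩

lemma aux_cancel {C : Type*} [Category C] {a b c d : C} (f : a ⟶ b) (g : b ⟶ c)
    (i : d ≅ c) : f ≫ g = (f ≫ g ≫ i.inv) ≫ i.hom := by simp

lemma aux_cancel2 {C : Type*} [Category C] {p q c d : C} (a : p ⟶ q) (b : q ⟶ c)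
    (f1 : p ⟶ d) (i : d ≅ c) (h : a ≫ b = f1 ≫ i.hom) : a ≫ b ≫ i.inv = f1 := by
  rw [← Category.assoc, h]; simp

/-- A morphism in the weak pullback `⟨Ψ_n, Ψ_n⟩` is determined by its second component. -/
def homEquiv (x y : WeakPullback (psiIncl n) (psiIncl n)) : (x ⟶ y) ≃ (x.b ⟶ y.b) where
  toFun f := f.1.2
  invFun g := ⟨(ObjectProperty.homMk (x.α.hom ≫ g.hom ≫ y.α.inv), g), by
    show x.α.hom ≫ g.hom = (x.α.hom ≫ g.hom ≫ y.α.inv) ≫ y.α.hom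
    exact aux_cancel _ _ _⟩
  left_inv f := by
    apply Subtype.ext
    apply Prod.ext
    · have h := f.2
      change x.α.hom ≫ f.1.2.hom = f.1.1.hom ≫ y.α.hom at h
      apply ObjectProperty.hom_ext
      show x.α.hom ≫ f.1.2.hom ≫ y.α.inv = f.1.1.hom
      exact aux_cancel2 _ _ _ _ h
    · rfl
  right_inv g := rfl

lemma card_aut (x : WeakPullback (psiIncl n) (psiIncl n)) :
    Nat.card (Aut x) = n.factorial := by
  have e1 : Aut x ≃ (x ⟶ x) := Groupoid.isoEquivHom x x
  have e2 : (x ⟶ x) ≃ (x.b ⟶ x.b) := homEquiv x x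
  have e3 : (x.b ⟶ x.b) ≃ (toFin x.b.obj ≅ toFin x.b.obj) := InducedCategory.homEquiv.trans (psiHomEquiv x.b x.b)
  have e4 : (toFin x.b.obj ≅ toFin x.b.obj) ≃ (toFin x.b.obj ≃ toFin x.b.obj) :=
    FintypeCat.equivEquivIso.symm
  have hc : Fintype.card (toFin x.b.obj) = n := by
    rw [← Nat.card_eq_fintype_card]; exact card_toFin x.b
  have e5 : ((toFin x.b.obj : Type _) ≃ toFin x.b.obj) ≃ (Fin n ≃ Fin n) :=
    Equiv.equivCongr (Fintype.equivFinOfCardEq hc) (Fintype.equivFinOfCardEq hc)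
  rw [Nat.card_congr ((((e1.trans e2).trans e3).trans e4).trans e5)]
  have : Nat.card ((Fin n ≃ Fin n : Type)) = Nat.card (Equiv.Perm (Fin n)) := rfl
  rw [this, Nat.card_eq_fintype_card, Fintype.card_perm, Fintype.card_fin]

lemma iso_wp (x y : WeakPullback (psiIncl n) (psiIncl n)) : Nonempty (x ≅ y) := by
  have hc : Fintype.card (toFin x.b.obj) = Fintype.card (toFin y.b.obj) := by
    rw [← Nat.card_eq_fintype_card, ← Nat.card_eq_fintype_card, card_toFin, card_toFin]
  have g : x.b ⟶ y.b :=
    InducedCategory.homEquiv.symm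
      ((psiHomEquiv x.b y.b).symm (FintypeCat.equivEquivIso (Fintype.equivOfCardEq hc)))
  exact ⟨(Groupoid.isoEquivHom x y).symm ((homEquiv x y).symm g)⟩

lemma nonempty_wp (n : ℕ) : Nonempty (WeakPullback (psiIncl n) (psiIncl n)) := by
  refine ⟨⟨⟨⟨FintypeCat.of (ULift (Fin n))⟩, ?_⟩, ⟨⟨FintypeCat.of (ULift (Fin n))⟩, ?_⟩,
    Iso.refl _⟩⟩ <;>
  simp [Core.inclusion, Nat.card_eq_fintype_card, FintypeCat.of, Bundled.of,
    Fintype.card_ulift, Fintype.card_fin]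

/-- The inner product groupoid `⟨Ψ_m, Ψ_n⟩`, i.e. the weak pullback over the groupoid of
finite sets of the groupoids of `m`-element and `n`-element sets, has groupoid
cardinality `1/n!` if `m = n` and `0` otherwise. -/
theorem groupoidCard_innerProduct_psi (m n : ℕ) :
    groupoidCard (WeakPullback (psiIncl m) (psiIncl n)) =
      if m = n then ((Nat.factorial n : ENNReal))⁻¹ else 0 := by
  by_cases h : m = n
  · subst h
    rw [if_pos rfl, groupoidCard]
    haveI hs : Subsingleton
        (Quotient (isIsomorphicSetoid (WeakPullback (psiIncl m) (psiIncl m)))) := by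
      constructor
      intro a b
      induction a using Quotient.ind
      induction b using Quotient.ind
      exact Quotient.sound (iso_wp _ _)
    obtain ⟨x⟩ := nonempty_wp m
    rw [tsum_eq_single (Quotient.mk _ x)
      (fun b hb => absurd (Subsingleton.elim b _) hb)]
    rw [card_aut]
  · rw [if_neg h, groupoidCard]
    haveI := isEmpty_wp h
    exact tsum_empty
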